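/- Let A ∈ R^{n×n} be PSD, y ∈ R^n, λ ≥ 0, ε ∈ (0,1/2], and let B ∈ R^{n×n} satisfy ‖A − B‖_2^2 ≤ ε^2 λ. Then for every x ∈ R^n: ‖Bx − y‖_2^2 + λ‖x‖_2^2 ∈ [(1−2ε)(‖Ax−y‖_2^2 + λ‖x‖_2^2), (1+2ε)(‖Ax−y‖_2^2 + λ‖x‖_2^2)]. -/

import Mathlib

open Matrix

/-- Spectral (operator) norm of a matrix. -/
noncomputable def spec {n m : ℕ} (A : Matrix (Fin n) (Fin m) ℝ) : ℝ :=
  ‖LinearMap.toContinuousLinearMap (Matrix.toEuclideanLin A)‖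


private lemma ridge_arith (a b c ip lam ε : ℝ) (hlam : 0 ≤ lam) (hε0 : 0 < ε)
    (hε2 : ε ≤ 1 / 2) (ha : 0 ≤ a) (hb : 0 ≤ b) (hb2 : b ^ 2 ≤ ε ^ 2 * lam * c ^ 2)
    (hip : |ip| ≤ a * b) :
    (1 - 2 * ε) * (a ^ 2 + lam * c ^ 2) ≤ a ^ 2 + 2 * ip + b ^ 2 + lam * c ^ 2 ∧
      a ^ 2 + 2 * ip + b ^ 2 + lam * c ^ 2 ≤ (1 + 2 * ε) * (a ^ 2 + lam * c ^ 2) := by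
  have h1 := (abs_le.mp hip).1
  have h2 := (abs_le.mp hip).2
  have hamgm : 2 * ε * (a * b) ≤ ε ^ 2 * a ^ 2 + b ^ 2 := by
    nlinarith [sq_nonneg (ε * a - b)]
  have hεb : 0 ≤ ε * b ^ 2 := mul_nonneg hε0.le (sq_nonneg _)
  have hεv2 : ε * b ^ 2 ≤ ε * (ε ^ 2 * lam * c ^ 2) := mul_le_mul_of_nonneg_left hb2 hε0.le
  have hεlc : 0 ≤ ε ^ 2 * (lam * c ^ 2) :=
    mul_nonneg (sq_nonneg _) (mul_nonneg hlam (sq_nonneg _))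
  constructor
  · have key : ε * ((1 - 2 * ε) * (a ^ 2 + lam * c ^ 2))
        ≤ ε * (a ^ 2 + 2 * ip + b ^ 2 + lam * c ^ 2) := by
      nlinarith [hamgm, hb2, hεb, sq_nonneg (ε * a), hεlc,
        mul_le_mul_of_nonneg_left h1 hε0.le]
    exact le_of_mul_le_mul_left key hε0
  · have key : ε * (a ^ 2 + 2 * ip + b ^ 2 + lam * c ^ 2)
        ≤ ε * ((1 + 2 * ε) * (a ^ 2 + lam * c ^ 2)) := by
      nlinarith [hamgm, hb2, hεb, hεv2, sq_nonneg (ε * a), hεlc,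
        mul_le_mul_of_nonneg_left h2 hε0.le]
    exact le_of_mul_le_mul_left key hε0

/-- If `‖A - B‖₂² ≤ ε²λ`, then for every `x` the ridge regression objective of `B` is within a
`(1 ± 2ε)` multiplicative factor of that of `A`. -/
theorem ridge_objective_comparison {n : ℕ}
    (A B : Matrix (Fin n) (Fin n) ℝ) (hA : A.PosSemidef)
    (y : EuclideanSpace ℝ (Fin n)) (lam ε : ℝ) (hlam : 0 ≤ lam)
    (hε : ε ∈ Set.Ioc (0 : ℝ) (1 / 2))
    (hAB : spec (A - B) ^ 2 ≤ ε ^ 2 * lam)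
    (x : EuclideanSpace ℝ (Fin n)) :
    (1 - 2 * ε) * (‖Matrix.toEuclideanLin A x - y‖ ^ 2 + lam * ‖x‖ ^ 2)
        ≤ ‖Matrix.toEuclideanLin B x - y‖ ^ 2 + lam * ‖x‖ ^ 2 ∧
      ‖Matrix.toEuclideanLin B x - y‖ ^ 2 + lam * ‖x‖ ^ 2
        ≤ (1 + 2 * ε) * (‖Matrix.toEuclideanLin A x - y‖ ^ 2 + lam * ‖x‖ ^ 2) := by
  obtain ⟨hε0, hε2⟩ := hε
  set u : EuclideanSpace ℝ (Fin n) := Matrix.toEuclideanLin A x - y with hu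
  set v : EuclideanSpace ℝ (Fin n) :=
    Matrix.toEuclideanLin B x - Matrix.toEuclideanLin A x with hv
  have hBxy : Matrix.toEuclideanLin B x - y = u + v := by
    simp [hu, hv]
  -- bound ‖v‖ via the operator norm
  have hvnorm : ‖v‖ ≤ spec (A - B) * ‖x‖ := by
    have : v = - (Matrix.toEuclideanLin (A - B) x) := by
      simp [hv, Matrix.toEuclideanLin]
    rw [this, norm_neg]
    exact (LinearMap.toContinuousLinearMap (Matrix.toEuclideanLin (A - B))).le_opNorm x
  have hspec0 : (0 : ℝ) ≤ spec (A - B) := norm_nonneg _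
  have hv2 : ‖v‖ ^ 2 ≤ ε ^ 2 * lam * ‖x‖ ^ 2 := by
    calc ‖v‖ ^ 2 ≤ (spec (A - B) * ‖x‖) ^ 2 := by
          exact pow_le_pow_left₀ (norm_nonneg _) hvnorm 2
      _ = spec (A - B) ^ 2 * ‖x‖ ^ 2 := by ring
      _ ≤ ε ^ 2 * lam * ‖x‖ ^ 2 := by
          exact mul_le_mul_of_nonneg_right hAB (sq_nonneg _)
  have hexp : ‖u + v‖ ^ 2 = ‖u‖ ^ 2 + 2 * inner ℝ u v + ‖v‖ ^ 2 := by
    rw [@norm_add_sq_real]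
  have hinner : |inner ℝ u v| ≤ ‖u‖ * ‖v‖ := abs_real_inner_le_norm u v
  rw [hBxy, hexp]
  exact ridge_arith ‖u‖ ‖v‖ ‖x‖ (inner ℝ u v) lam ε hlam hε0 hε2 (norm_nonneg _)
    (norm_nonneg _) hv2 hinner
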